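/- Let q ∈ ℝ, γ ∈ {0,1}, ρ_X > 0, and let v_hs : [0, X_max] → [0,∞) be differentiable and nonincreasing with v_hs(X_max) = 0, where 0 < X_max < ρ_X. Define f(X) := X·v_hs(X), λ₁(X) := q + γ·f'(X) and λ₂(X) := q − γ·f(X)/(ρ_X − X). Then λ₁(0) ≥ λ₂(0) and λ₁(X_max) ≤ λ₂(X_max); consequently, if γ = 1 and v_hs(0) > 0, by continuity there exists X* ∈ (0, X_max] with λ₁(X*) = λ₂(X*). -/

import Mathlib

open Set Filter

theorem stmt3 (q γ ρX Xmax : ℝ) (hγ : γ = 0 ∨ γ = 1) (hXmax : 0 < Xmax) (hXρ : Xmax < ρX)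
    (vhs : ℝ → ℝ) (hsm : ContDiff ℝ 1 vhs)
    (hnonneg : ∀ x ∈ Set.Icc 0 Xmax, 0 ≤ vhs x)
    (hanti : AntitoneOn vhs (Set.Icc 0 Xmax))
    (hend : vhs Xmax = 0) :
    let f := fun X => X * vhs X
    let lam1 := fun X => q + γ * deriv f X
    let lam2 := fun X => q - γ * f X / (ρX - X)
    lam2 0 ≤ lam1 0 ∧ lam1 Xmax ≤ lam2 Xmax ∧
      (γ = 1 → 0 < vhs 0 → ∃ Xs ∈ Set.Ioc 0 Xmax, lam1 Xs = lam2 Xs) := by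
  intro f lam1 lam2
  have hγ0 : 0 ≤ γ := by rcases hγ with h | h <;> simp [h]
  have hdiff : Differentiable ℝ vhs := hsm.differentiable one_ne_zero
  have hderivf : ∀ x, deriv f x = vhs x + x * deriv vhs x := by
    intro x
    have h := (hasDerivAt_id' (x := x)).mul (hdiff x).hasDerivAt
    show deriv (fun X => X * vhs X) x = _
    have h2 := h.deriv; rw [one_mul] at h2; exact h2
  -- derivative of vhs at Xmax is ≤ 0
  have hdvhs : deriv vhs Xmax ≤ 0 := by
    have hd : HasDerivWithinAt vhs (deriv vhs Xmax) (Iio Xmax) Xmax :=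
      (hdiff Xmax).hasDerivAt.hasDerivWithinAt
    rw [hasDerivWithinAt_iff_tendsto_slope] at hd
    have hsub : Iio Xmax \ {Xmax} = Iio Xmax := by
      ext x; simp (config := {contextual := true}) [lt_irrefl, ne_of_lt]
    rw [hsub] at hd
    refine le_of_tendsto hd ?_
    filter_upwards [Ioo_mem_nhdsLT_of_mem (⟨hXmax, le_rfl⟩ :
        Xmax ∈ Ioc (0:ℝ) Xmax)] with x hx
    have hle : vhs Xmax ≤ vhs x :=
      hanti ⟨hx.1.le, hx.2.le⟩ ⟨hXmax.le, le_rfl⟩ hx.2.le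
    rw [slope_def_field]
    exact div_nonpos_of_nonneg_of_nonpos (by linarith) (by linarith [hx.2])
  have hf0 : f Xmax = 0 := by simp [f, hend]
  have hderivf0 : deriv f 0 = vhs 0 := by simp [hderivf]
  have hderivfX : deriv f Xmax = Xmax * deriv vhs Xmax := by simp [hderivf, hend]
  refine ⟨?_, ?_, ?_⟩
  · have h1 : lam2 0 = q := by simp [lam2, f]
    have h2 : lam1 0 = q + γ * vhs 0 := by simp [lam1, hderivf0]
    have := hnonneg 0 ⟨le_rfl, hXmax.le⟩
    rw [h1, h2]; nlinarith
  · have h1 : lam2 Xmax = q := by simp [lam2, hf0]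
    have h2 : lam1 Xmax = q + γ * (Xmax * deriv vhs Xmax) := by simp [lam1, hderivfX]
    rw [h1, h2]; nlinarith [mul_nonneg (mul_nonneg hγ0 hXmax.le) (neg_nonneg.mpr hdvhs)]
  · intro hγ1 hv0
    set g : ℝ → ℝ := fun X => deriv f X + f X / (ρX - X) with hg
    have hfc : ContDiff ℝ 1 f := contDiff_id.mul hsm
    have hgc : ContinuousOn g (Icc 0 Xmax) := by
      apply ContinuousOn.add
      · exact (hfc.continuous_deriv le_rfl).continuousOn
      · apply ContinuousOn.div (hfc.continuous.continuousOn)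
          (by fun_prop)
        intro x hx
        have : x < ρX := lt_of_le_of_lt hx.2 hXρ
        linarith
    have hgX : g Xmax ≤ 0 := by
      simp only [hg, hf0, hderivfX, zero_div, add_zero]
      nlinarith [mul_nonneg hXmax.le (neg_nonneg.mpr hdvhs)]
    have hg0 : 0 < g 0 := by
      simp only [hg, hderivf0, f]
      simpa using hv0
    have h0mem : (0:ℝ) ∈ Icc (g Xmax) (g 0) := ⟨hgX, hg0.le⟩
    obtain ⟨Xs, hXs, hgXs⟩ := intermediate_value_Icc' hXmax.le hgc h0mem
    have hXsne : Xs ≠ 0 := by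
      intro h; rw [h] at hgXs; linarith
    refine ⟨Xs, ⟨lt_of_le_of_ne hXs.1 (Ne.symm hXsne), hXs.2⟩, ?_⟩
    have hden : ρX - Xs ≠ 0 := by
      have : Xs < ρX := lt_of_le_of_lt hXs.2 hXρ
      intro h; linarith
    simp only [lam1, lam2, hγ1, one_mul]
    have : deriv f Xs + f Xs / (ρX - Xs) = 0 := hgXs
    linarith
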